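/- arXiv:1106.5191 — 2 statements merged into one kernel-verified Lean document; each statement's English description precedes it below -/
import Mathlib

section
/- (Discrete uniform Gronwall lemma.) Let Δt > 0 and let (fₙ), (gₙ), (yₙ) be sequences of nonnegative real numbers satisfying (yₙ₊₁ − yₙ)/Δt ≤ fₙ yₙ + gₙ for all n ≥ 0. Suppose there exist an integer n₀ ≥ 0, a real r > 0, and nonnegative constants a₀, a₁, a₂ such that, setting N = ⌊r/Δt⌋, for every integer k₀ ≥ n₀ one has Δt · Σ_{n=k₀}^{k₀+N} fₙ ≤ a₀, Δt · Σ_{n=k₀}^{k₀+N} gₙ ≤ a₁, and Δt · Σ_{n=k₀}^{k₀+N} yₙ ≤ a₂. Then yₙ ≤ (a₁ + a₂/r) · exp(a₀) for all n ≥ n₀ + N. -/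
/-- Discrete uniform Gronwall lemma (Lemma 3 of the paper, after Shen). -/
theorem discrete_uniform_gronwall (Δt : ℝ) (hΔt : 0 < Δt) (f g y : ℕ → ℝ)
    (hf : ∀ n, 0 ≤ f n) (hg : ∀ n, 0 ≤ g n) (hy : ∀ n, 0 ≤ y n)
    (hrec : ∀ n : ℕ, (y (n + 1) - y n) / Δt ≤ f n * y n + g n)
    (n₀ : ℕ) (r : ℝ) (hr : 0 < r) (a₀ a₁ a₂ : ℝ)
    (ha₀ : 0 ≤ a₀) (ha₁ : 0 ≤ a₁) (ha₂ : 0 ≤ a₂)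
    (hsumf : ∀ k₀ : ℕ, n₀ ≤ k₀ →
      Δt * ∑ n ∈ Finset.Icc k₀ (k₀ + ⌊r / Δt⌋₊), f n ≤ a₀)
    (hsumg : ∀ k₀ : ℕ, n₀ ≤ k₀ →
      Δt * ∑ n ∈ Finset.Icc k₀ (k₀ + ⌊r / Δt⌋₊), g n ≤ a₁)
    (hsumy : ∀ k₀ : ℕ, n₀ ≤ k₀ →
      Δt * ∑ n ∈ Finset.Icc k₀ (k₀ + ⌊r / Δt⌋₊), y n ≤ a₂) :
    ∀ n : ℕ, n₀ + ⌊r / Δt⌋₊ ≤ n → y n ≤ (a₁ + a₂ / r) * Real.exp a₀ := by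
  set N := ⌊r / Δt⌋₊ with hN
  -- step recurrence in multiplicative form
  have hstep : ∀ n : ℕ, y (n + 1) ≤ (1 + Δt * f n) * y n + Δt * g n := by
    intro n
    have h := hrec n
    have h2 : y (n + 1) - y n ≤ Δt * (f n * y n + g n) := by
      rw [div_le_iff₀ hΔt] at h; linarith [h]
    nlinarith
  -- iterated bound
  have hiter : ∀ m n : ℕ, m ≤ n →
      y n ≤ (∏ j ∈ Finset.Ico m n, (1 + Δt * f j)) *
        (y m + Δt * ∑ j ∈ Finset.Ico m n, g j) := by
    intro m n hmn
    induction n, hmn using Nat.le_induction with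
    | base => simp
    | succ n hmn ih =>
      have hprodpos : ∀ k, (1:ℝ) ≤ ∏ j ∈ Finset.Ico m k, (1 + Δt * f j) := by
        intro k
        calc (1:ℝ) = ∏ _j ∈ Finset.Ico m k, (1:ℝ) := by simp
          _ ≤ ∏ j ∈ Finset.Ico m k, (1 + Δt * f j) :=
            Finset.prod_le_prod (by intro j _; norm_num)
              (by intro j _; nlinarith [hf j, hΔt.le])
      have h1 : (0:ℝ) ≤ 1 + Δt * f n := by nlinarith [hf n, hΔt.le]
      calc y (n+1) ≤ (1 + Δt * f n) * y n + Δt * g n := hstep n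
        _ ≤ (1 + Δt * f n) * ((∏ j ∈ Finset.Ico m n, (1 + Δt * f j)) *
              (y m + Δt * ∑ j ∈ Finset.Ico m n, g j)) + Δt * g n := by
            have := ih
            nlinarith [this, h1]
        _ ≤ (∏ j ∈ Finset.Ico m (n+1), (1 + Δt * f j)) *
              (y m + Δt * ∑ j ∈ Finset.Ico m (n+1), g j) := by
            rw [Finset.prod_Ico_succ_top hmn, Finset.sum_Ico_succ_top hmn]
            have hP := hprodpos n
            have hP1 := hprodpos (n+1)
            have hPn1 : (1:ℝ) ≤ (∏ j ∈ Finset.Ico m n, (1 + Δt * f j)) * (1 + Δt * f n) := by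
              rw [← Finset.prod_Ico_succ_top hmn]; exact hprodpos (n+1)
            have hg' := hg n
            have := hΔt.le
            nlinarith [hP, hPn1, hg n, hΔt.le, mul_nonneg hΔt.le (hg n)]
  intro n hn
  set k₀ := n - N with hk₀
  have hk₀n : k₀ + N = n := by omega
  have hk₀le : n₀ ≤ k₀ := by omega
  have hNr : r < Δt * (N + 1) := by
    have := Nat.lt_floor_add_one (r / Δt)
    rw [div_lt_iff₀ hΔt] at this
    linarith [this]
  -- find m in the window with y m small
  obtain ⟨m, hm, hym⟩ : ∃ m ∈ Finset.Icc k₀ n, y m ≤ a₂ / r := by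
    by_contra hcon
    push_neg at hcon
    have hne : (Finset.Icc k₀ n).Nonempty := by
      refine ⟨k₀, ?_⟩; simp; omega
    have hlt : ∑ _m ∈ Finset.Icc k₀ n, a₂ / r < ∑ m ∈ Finset.Icc k₀ n, y m :=
      Finset.sum_lt_sum_of_nonempty hne hcon
    rw [Finset.sum_const, Nat.card_Icc] at hlt
    have hcard : n + 1 - k₀ = N + 1 := by omega
    rw [hcard] at hlt
    have hsy := hsumy k₀ hk₀le
    rw [hk₀n] at hsy
    have h1 : a₂ ≤ ((N:ℝ) + 1) * (a₂ / r) * Δt := by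
      have h2 : a₂ / r * r ≤ a₂ / r * (Δt * (N + 1)) := by
        apply mul_le_mul_of_nonneg_left hNr.le (div_nonneg ha₂ hr.le)
      rw [div_mul_cancel₀ _ hr.ne'] at h2
      nlinarith [h2]
    rw [nsmul_eq_mul] at hlt
    push_cast at hlt
    nlinarith [hlt, hΔt]
  -- bound the product by exp a₀
  simp only [Finset.mem_Icc] at hm
  have hsub : Finset.Ico m n ⊆ Finset.Icc k₀ (k₀ + N) := by
    intro j hj
    simp only [Finset.mem_Ico, Finset.mem_Icc] at hj ⊢
    omega
  have hprod_le : (∏ j ∈ Finset.Ico m n, (1 + Δt * f j)) ≤ Real.exp a₀ := by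
    have h1 : (∏ j ∈ Finset.Ico m n, (1 + Δt * f j)) ≤
        ∏ j ∈ Finset.Ico m n, Real.exp (Δt * f j) := by
      apply Finset.prod_le_prod
      · intro j _; nlinarith [hf j, hΔt.le]
      · intro j _; have := Real.add_one_le_exp (Δt * f j); linarith
    have h2 : (∏ j ∈ Finset.Ico m n, Real.exp (Δt * f j)) =
        Real.exp (∑ j ∈ Finset.Ico m n, Δt * f j) := by
      rw [Real.exp_sum]
    have h3 : (∑ j ∈ Finset.Ico m n, Δt * f j) ≤ a₀ := by
      rw [← Finset.mul_sum]
      calc Δt * ∑ j ∈ Finset.Ico m n, f j ≤ Δt * ∑ j ∈ Finset.Icc k₀ (k₀+N), f j := by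
            apply mul_le_mul_of_nonneg_left _ hΔt.le
            exact Finset.sum_le_sum_of_subset_of_nonneg hsub (fun j _ _ => hf j)
        _ ≤ a₀ := hsumf k₀ hk₀le
    calc (∏ j ∈ Finset.Ico m n, (1 + Δt * f j)) ≤ Real.exp (∑ j ∈ Finset.Ico m n, Δt * f j) := by
          rw [← h2]; exact h1
      _ ≤ Real.exp a₀ := Real.exp_le_exp.mpr h3
  have hgsum : Δt * ∑ j ∈ Finset.Ico m n, g j ≤ a₁ := by
    calc Δt * ∑ j ∈ Finset.Ico m n, g j ≤ Δt * ∑ j ∈ Finset.Icc k₀ (k₀+N), g j := by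
          apply mul_le_mul_of_nonneg_left _ hΔt.le
          exact Finset.sum_le_sum_of_subset_of_nonneg hsub (fun j _ _ => hg j)
      _ ≤ a₁ := hsumg k₀ hk₀le
  have hmain := hiter m n hm.2
  have hprodnn : (0:ℝ) ≤ ∏ j ∈ Finset.Ico m n, (1 + Δt * f j) := by
    apply Finset.prod_nonneg; intro j _; nlinarith [hf j, hΔt.le]
  have hinner : y m + Δt * ∑ j ∈ Finset.Ico m n, g j ≤ a₂ / r + a₁ := by
    linarith [hym, hgsum]
  have hinnernn : (0:ℝ) ≤ y m + Δt * ∑ j ∈ Finset.Ico m n, g j := by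
    have : (0:ℝ) ≤ Δt * ∑ j ∈ Finset.Ico m n, g j :=
      mul_nonneg hΔt.le (Finset.sum_nonneg fun j _ => hg j)
    linarith [hy m]
  calc y n ≤ (∏ j ∈ Finset.Ico m n, (1 + Δt * f j)) *
        (y m + Δt * ∑ j ∈ Finset.Ico m n, g j) := hmain
    _ ≤ Real.exp a₀ * (a₂ / r + a₁) := by
        apply mul_le_mul hprod_le hinner hinnernn (Real.exp_nonneg _)
    _ = (a₁ + a₂ / r) * Real.exp a₀ := by ring
end

section
/- Let (H, d) be a complete metric space and let S : H → H be continuous. Assume: (i) there exists a nonempty bounded set B ⊆ H such that for every θ⁰ ∈ H there is n₀ ∈ ℕ with Sⁿθ⁰ ∈ B for all n ≥ n₀; (ii) for every bounded set C ⊆ H there exists n₁ ∈ ℕ such that the union ⋃_{n ≥ n₁} Sⁿ(C) has compact closure in H. Then the set A = ⋂_{n ≥ 0} closure(⋃_{k ≥ n} S^k(B)) is nonempty and compact, S(A) = A, and for every θ⁰ ∈ H the distance from Sⁿθ⁰ to A tends to 0 as n → ∞. -/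
open Filter

/-- Existence of the global attractor for a discrete dynamical system
(Proposition 7 of the paper, after Temam). -/
theorem discrete_global_attractor {H : Type*} [MetricSpace H] [CompleteSpace H]
    (S : H → H) (hS : Continuous S) (B : Set H) (hBne : B.Nonempty)
    (hBbdd : Bornology.IsBounded B)
    (habs : ∀ θ0 : H, ∃ n₀ : ℕ, ∀ n : ℕ, n₀ ≤ n → S^[n] θ0 ∈ B)
    (hcpt : ∀ C : Set H, Bornology.IsBounded C →
      ∃ n₁ : ℕ, IsCompact (closure (⋃ n ≥ n₁, S^[n] '' C))) :
    (⋂ n : ℕ, closure (⋃ k ≥ n, S^[k] '' B)).Nonempty ∧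
      IsCompact (⋂ n : ℕ, closure (⋃ k ≥ n, S^[k] '' B)) ∧
      S '' (⋂ n : ℕ, closure (⋃ k ≥ n, S^[k] '' B)) =
        ⋂ n : ℕ, closure (⋃ k ≥ n, S^[k] '' B) ∧
      ∀ θ0 : H, Tendsto
        (fun n : ℕ => Metric.infDist (S^[n] θ0) (⋂ m : ℕ, closure (⋃ k ≥ m, S^[k] '' B)))
        atTop (nhds 0) := by
  obtain ⟨n₁, hKcpt⟩ := hcpt B hBbdd
  set W : ℕ → Set H := fun n => ⋃ k ≥ n, S^[k] '' B with hWdef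
  set A : Set H := ⋂ n : ℕ, closure (W n) with hAdef
  have hKc : IsCompact (closure (W n₁)) := hKcpt
  have hmem : ∀ (k : ℕ) (b : H), b ∈ B → ∀ n : ℕ, n ≤ k → S^[k] b ∈ W n := by
    intro k b hb n hn
    exact Set.mem_biUnion hn ⟨b, hb, rfl⟩
  have hanti : ∀ {m n : ℕ}, m ≤ n → W n ⊆ W m := by
    intro m n hmn x hx
    simp only [hWdef, Set.mem_iUnion, exists_prop] at hx ⊢
    obtain ⟨k, hk, hxk⟩ := hx
    exact ⟨k, hmn.trans hk, hxk⟩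
  have horb : ∀ (θ0 : H) (n₀ : ℕ), S^[n₀] θ0 ∈ B →
      ∀ m n : ℕ, n₀ + m ≤ n → S^[n] θ0 ∈ W m := by
    intro θ0 n₀ hb m n hn
    have h1 : n - n₀ + n₀ = n := Nat.sub_add_cancel (by omega)
    have h2 : m ≤ n - n₀ := by omega
    have := hmem (n - n₀) _ hb m h2
    rwa [← Function.iterate_add_apply, h1] at this
  have hlimA : ∀ (g : ℕ → H) (x : H), Tendsto g atTop (nhds x) →
      (∀ m : ℕ, ∀ᶠ j in atTop, g j ∈ W m) → x ∈ A := by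
    intro g x hg hm
    exact Set.mem_iInter.2 fun m => mem_closure_of_tendsto hg (hm m)
  have hWne : ∀ n : ℕ, (W n).Nonempty :=
    fun n => ⟨S^[n] hBne.choose, hmem n _ hBne.choose_spec n le_rfl⟩
  have hAclosed : IsClosed A := isClosed_iInter fun n => isClosed_closure
  have hAcpt : IsCompact A :=
    hKc.of_isClosed_subset hAclosed (Set.iInter_subset _ n₁)
  have hAne : A.Nonempty := by
    have hV : (⋂ j : ℕ, closure (W (n₁ + j))).Nonempty := by
      apply IsCompact.nonempty_iInter_of_sequence_nonempty_isCompact_isClosed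
      · intro j; exact closure_mono (hanti (by omega))
      · intro j; exact (hWne _).closure
      · simpa using hKc
      · intro j; exact isClosed_closure
    obtain ⟨x, hx⟩ := hV
    refine ⟨x, Set.mem_iInter.2 fun n => ?_⟩
    exact closure_mono (hanti (Nat.le_add_left n n₁)) (Set.mem_iInter.1 hx n)
  have hSW : ∀ n : ℕ, Set.MapsTo S (W n) (W n) := by
    intro n x hx
    simp only [hWdef, Set.mem_iUnion, exists_prop] at hx
    obtain ⟨k, hk, b, hb, rfl⟩ := hx
    have h1 : S (S^[k] b) = S^[k + 1] b := (Function.iterate_succ_apply' S k b).symm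
    rw [h1]
    exact hmem (k + 1) b hb n (by omega)
  have hSA_sub : S '' A ⊆ A := by
    rintro _ ⟨x, hx, rfl⟩
    exact Set.mem_iInter.2 fun n => ((hSW n).closure hS) (Set.mem_iInter.1 hx n)
  have hA_sub_SA : A ⊆ S '' A := by
    intro y hy
    have hch : ∀ j : ℕ, ∃ z, z ∈ W (j + 1) ∧ dist y z < 1 / ((j : ℝ) + 1) := by
      intro j
      have hyc : y ∈ closure (W (j + 1)) := Set.mem_iInter.1 hy (j + 1)
      obtain ⟨z, hz, hd⟩ := Metric.mem_closure_iff.1 hyc (1 / ((j : ℝ) + 1)) (by positivity)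
      exact ⟨z, hz, hd⟩
    choose z hz hdz using hch
    have hrep : ∀ j : ℕ, ∃ k, j + 1 ≤ k ∧ ∃ b ∈ B, S^[k] b = z j := by
      intro j
      have := hz j
      simp only [hWdef, Set.mem_iUnion, exists_prop] at this
      obtain ⟨k, hk, b, hb, hbe⟩ := this
      exact ⟨k, hk, b, hb, hbe⟩
    choose k hk b hb hbe using hrep
    set u : ℕ → H := fun j => S^[k (j + n₁) - 1] (b (j + n₁)) with hu
    have huW : ∀ j m : ℕ, m ≤ j + n₁ → u j ∈ W m := by
      intro j m hm
      exact hmem _ _ (hb _) m (by have := hk (j + n₁); omega)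
    have huK : ∀ j, u j ∈ closure (W n₁) :=
      fun j => subset_closure (huW j n₁ (by omega))
    obtain ⟨x, hxK, ψ, hψ, hux⟩ := hKc.tendsto_subseq huK
    have hxA : x ∈ A := by
      refine hlimA _ x hux ?_
      intro m
      filter_upwards [eventually_ge_atTop m] with i hi
      exact huW (ψ i) m (le_trans (hi.trans hψ.le_apply) (Nat.le_add_right _ _))
    have hSu : ∀ j : ℕ, S (u j) = z (j + n₁) := by
      intro j
      have h1 : k (j + n₁) - 1 + 1 = k (j + n₁) := by have := hk (j + n₁); omega
      calc S (S^[k (j + n₁) - 1] (b (j + n₁)))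
          = S^[k (j + n₁) - 1 + 1] (b (j + n₁)) :=
            (Function.iterate_succ_apply' S _ _).symm
        _ = z (j + n₁) := by rw [h1, hbe]
    have hψt : Tendsto (fun i => ψ i + n₁) atTop atTop :=
      tendsto_atTop_mono (fun i => le_trans hψ.le_apply (Nat.le_add_right _ _)) tendsto_id
    have hzy : Tendsto (fun i => z (ψ i + n₁)) atTop (nhds y) := by
      rw [tendsto_iff_dist_tendsto_zero]
      refine squeeze_zero (fun i => dist_nonneg)
        (g := fun i => 1 / (((ψ i + n₁ : ℕ) : ℝ) + 1)) (fun i => ?_) ?_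
      · rw [dist_comm]
        exact (hdz (ψ i + n₁)).le
      · exact tendsto_one_div_add_atTop_nhds_zero_nat.comp hψt
    have hSx : Tendsto (fun i => S (u (ψ i))) atTop (nhds (S x)) :=
      (hS.tendsto x).comp hux
    have heq : (fun i => S (u (ψ i))) = fun i => z (ψ i + n₁) :=
      funext fun i => hSu (ψ i)
    rw [heq] at hSx
    exact ⟨x, hxA, (tendsto_nhds_unique hzy hSx).symm⟩
  refine ⟨hAne, hAcpt, Set.Subset.antisymm hSA_sub hA_sub_SA, ?_⟩
  intro θ0
  obtain ⟨n₀, hn₀⟩ := habs θ0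
  have hb0 : S^[n₀] θ0 ∈ B := hn₀ n₀ le_rfl
  apply tendsto_of_subseq_tendsto
  intro ns hns
  obtain ⟨N, hN⟩ := eventually_atTop.1 (hns.eventually (eventually_ge_atTop (n₀ + n₁)))
  set w : ℕ → H := fun i => S^[ns (i + N)] θ0 with hwdef
  have hwK : ∀ i, w i ∈ closure (W n₁) := fun i =>
    subset_closure (horb θ0 n₀ hb0 n₁ _ (hN (i + N) (Nat.le_add_left _ _)))
  obtain ⟨x, hxK, ψ, hψ, hwx⟩ := hKc.tendsto_subseq hwK
  have hnn : Tendsto (fun i => ns (ψ i + N)) atTop atTop :=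
    hns.comp (tendsto_atTop_mono (fun i => le_trans hψ.le_apply (Nat.le_add_right _ _)) tendsto_id)
  have hxA : x ∈ A := by
    refine hlimA _ x hwx ?_
    intro m
    filter_upwards [hnn.eventually (eventually_ge_atTop (n₀ + m))] with i hi
    exact horb θ0 n₀ hb0 m _ hi
  refine ⟨fun i => ψ i + N, ?_⟩
  have hcont : Tendsto (fun i => Metric.infDist (w (ψ i)) A) atTop
      (nhds (Metric.infDist x A)) :=
    ((Metric.continuous_infDist_pt A).tendsto x).comp hwx
  rwa [Metric.infDist_zero_of_mem hxA] at hcont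
end
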